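/- For positive reals N and integers n, m with 0 ≤ m, the sum Σ_{n=0}^{m} n²·exp(−c·n²/m + C·n^{3/2}/N^{1/2}) is at most C'·m^{3/2}·exp(C''·m³/N²) for suitable positive constants C', C'' depending only on c and C. -/

import Mathlib

open Finset Real

-- Young-type absorption
lemma young_aux (c C : ℝ) (hc : 0 < c) (hC : 0 < C)
    (x : ℝ) (hx : 0 ≤ x) (m : ℝ) (hm : 1 ≤ m) (s : ℝ) (hs : 0 < s) :
    C * x ^ ((3:ℝ)/2) / s ≤ c/2 * x^2 / m + (8*C^4/c^3) * m^3 / s^4 := by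
  have hm0 : (0:ℝ) < m := lt_of_lt_of_le one_pos hm
  obtain ⟨t, ht⟩ : ∃ t, t = Real.sqrt x := ⟨_, rfl⟩
  have ht0 : 0 ≤ t := ht ▸ Real.sqrt_nonneg x
  have htx : t^2 = x := ht ▸ Real.sq_sqrt hx
  have hx32 : x ^ ((3:ℝ)/2) = t^3 := by
    rw [← htx, ← Real.rpow_natCast t 2, ← Real.rpow_mul ht0, ← Real.rpow_natCast t 3]
    norm_num
  rw [hx32, ← htx]
  rcases le_or_gt (2*C*m) (c*s*t) with h | h
  · have h1 : C * t^3 / s ≤ c/2 * (t^2)^2 / m := by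
      rw [div_le_div_iff₀ hs hm0]
      nlinarith [pow_nonneg ht0 3, mul_nonneg (mul_nonneg hc.le hs.le) ht0]
    have h2 : (0:ℝ) ≤ (8*C^4/c^3) * m^3 / s^4 := by positivity
    linarith
  · have hcube : (c*s*t)^3 ≤ (2*C*m)^3 := by
      apply pow_le_pow_left₀ (by positivity) h.le
    have h1 : C * t^3 / s ≤ (8*C^4/c^3) * m^3 / s^4 := by
      rw [div_le_div_iff₀ hs (by positivity)]
      have hc3 : (0:ℝ) < c^3 := by positivity
      rw [div_mul_eq_mul_div, div_mul_eq_mul_div, le_div_iff₀ hc3]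
      have hmul := mul_le_mul_of_nonneg_left hcube (mul_nonneg hC.le hs.le)
      nlinarith [hmul]
    have h2 : (0:ℝ) ≤ c/2 * (t^2)^2 / m := by positivity
    linarith

-- y * exp (-y) ≤ 1
lemma mul_exp_neg_le_one (y : ℝ) : y * Real.exp (-y) ≤ 1 := by
  have h := Real.add_one_le_exp y
  rw [Real.exp_neg, mul_inv_le_iff₀ (Real.exp_pos y)]
  linarith

lemma one_div_one_sub_exp_neg (a : ℝ) (ha : 0 < a) :
    (1 - Real.exp (-a))⁻¹ ≤ 1 + 1/a := by
  have hpos : (0:ℝ) < 1 + a := by linarith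
  have h1 : Real.exp (-a) ≤ 1/(1+a) := by
    rw [Real.exp_neg, one_div]
    exact inv_anti₀ hpos (by linarith [Real.add_one_le_exp a])
  have h2 : a/(1+a) ≤ 1 - Real.exp (-a) := by
    have : 1 - 1/(1+a) = a/(1+a) := by field_simp; ring
    linarith
  have h3 : (0:ℝ) < a/(1+a) := by positivity
  calc (1 - Real.exp (-a))⁻¹ ≤ (a/(1+a))⁻¹ := inv_anti₀ h3 h2
    _ = (1+a)/a := by rw [inv_div]
    _ = 1 + 1/a := by field_simp; ring

-- per-term gaussian bound
lemma per_term (c : ℝ) (hc : 0 < c) (x m : ℝ) (hx : 0 ≤ x) (hm : 1 ≤ m) :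
    x^2 * Real.exp (-(c/2) * x^2 / m) ≤
      (4*m/c) * Real.exp (c/16) * Real.exp (-(c/4) * x / Real.sqrt m) := by
  have hm0 : (0:ℝ) < m := lt_of_lt_of_le one_pos hm
  obtain ⟨sm, hsm⟩ : ∃ t, t = Real.sqrt m := ⟨_, rfl⟩
  have hsm0 : 0 < sm := hsm ▸ Real.sqrt_pos.2 hm0
  have hsm2 : sm^2 = m := hsm ▸ Real.sq_sqrt hm0.le
  rw [← hsm]
  -- x² exp(-(c/4)x²/m) ≤ 4m/c
  have e3 : x^2 * Real.exp (-((c/4) * x^2/m)) ≤ 4*m/c := by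
    have h := mul_exp_neg_le_one ((c/4)*x^2/m)
    have h2 : (4*m/c) * (((c/4)*x^2/m) * Real.exp (-((c/4)*x^2/m))) ≤ (4*m/c) * 1 :=
      mul_le_mul_of_nonneg_left h (by positivity)
    have h3 : (4*m/c) * (((c/4)*x^2/m) * Real.exp (-((c/4)*x^2/m)))
        = x^2 * Real.exp (-((c/4)*x^2/m)) := by
      field_simp
    rw [h3, mul_one] at h2
    exact h2
  -- exp(-(c/4)x²/m) ≤ exp(c/16) exp(-(c/4)x/sm)
  have e4 : Real.exp (-((c/4) * x^2/m)) ≤ Real.exp (c/16) * Real.exp (-(c/4) * x / sm) := by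
    rw [← Real.exp_add]
    apply Real.exp_le_exp.2
    rw [← hsm2]
    have heq : c/16 + -(c/4)*x/sm + c/4*x^2/sm^2 = (c * (sm - 2*x)^2) / (16 * sm^2) := by
      field_simp
      ring
    have hge : (0:ℝ) ≤ (c * (sm - 2*x)^2) / (16 * sm^2) := by positivity
    linarith [heq ▸ hge]
  have esplit : Real.exp (-(c/2) * x^2 / m)
      = Real.exp (-((c/4) * x^2/m)) * Real.exp (-((c/4) * x^2/m)) := by
    rw [← Real.exp_add]; congr 1; ring
  calc x^2 * Real.exp (-(c/2) * x^2 / m)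
      = (x^2 * Real.exp (-((c/4) * x^2/m))) * Real.exp (-((c/4) * x^2/m)) := by
        rw [esplit]; ring
    _ ≤ (4*m/c) * (Real.exp (c/16) * Real.exp (-(c/4) * x / sm)) :=
        mul_le_mul e3 e4 (Real.exp_nonneg _) (by positivity)
    _ = (4*m/c) * Real.exp (c/16) * Real.exp (-(c/4) * x / sm) := by ring

theorem sum_exp_estimate (c C : ℝ) (hc : 0 < c) (hC : 0 < C) :
    ∃ C' C'' : ℝ, 0 < C' ∧ 0 < C'' ∧
      ∀ m : ℕ, 1 ≤ m → ∀ N : ℝ, 0 < N →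
        ∑ n ∈ Finset.range (m + 1),
            (n : ℝ) ^ 2 *
              Real.exp (-c * (n : ℝ) ^ 2 / (m : ℝ) +
                C * (n : ℝ) ^ ((3 : ℝ) / 2) / Real.sqrt N)
          ≤ C' * (m : ℝ) ^ ((3 : ℝ) / 2) * Real.exp (C'' * (m : ℝ) ^ 3 / N ^ 2) := by
  refine ⟨(4/c) * Real.exp (c/16) * (1 + 4/c), 8*C^4/c^3, by positivity, by positivity, ?_⟩
  intro m hm N hN
  have hm1 : (1:ℝ) ≤ (m:ℝ) := by exact_mod_cast hm
  have hm0 : (0:ℝ) < m := lt_of_lt_of_le one_pos hm1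
  have hs : 0 < Real.sqrt N := Real.sqrt_pos.2 hN
  have hs4 : (Real.sqrt N)^4 = N^2 := by
    have h : (Real.sqrt N)^2 = N := Real.sq_sqrt hN.le
    nlinarith [h]
  obtain ⟨sm, hsm⟩ : ∃ t, t = Real.sqrt (m:ℝ) := ⟨_, rfl⟩
  have hsm0 : 0 < sm := hsm ▸ Real.sqrt_pos.2 hm0
  have hsm1 : 1 ≤ sm := by
    rw [hsm, show (1:ℝ) = Real.sqrt 1 by simp]
    exact Real.sqrt_le_sqrt hm1
  obtain ⟨r, hr⟩ : ∃ r, r = Real.exp (-(c/4)/sm) := ⟨_, rfl⟩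
  obtain ⟨E, hE⟩ : ∃ E, E = Real.exp ((8*C^4/c^3) * (m:ℝ)^3 / N^2) := ⟨_, rfl⟩
  have hE0 : 0 < E := hE ▸ Real.exp_pos _
  -- per-term bound
  have key : ∀ n ∈ Finset.range (m+1),
      (n : ℝ) ^ 2 * Real.exp (-c * (n : ℝ) ^ 2 / (m : ℝ)
          + C * (n : ℝ) ^ ((3 : ℝ) / 2) / Real.sqrt N)
        ≤ (4*(m:ℝ)/c) * Real.exp (c/16) * E * r^n := by
    intro n _
    have hx0 : (0:ℝ) ≤ (n:ℝ) := Nat.cast_nonneg n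
    have e1 : -c * (n:ℝ)^2 / (m:ℝ) + C * (n:ℝ) ^ ((3:ℝ)/2) / Real.sqrt N
        ≤ -(c/2) * (n:ℝ)^2/(m:ℝ) + (8*C^4/c^3) * (m:ℝ)^3 / N^2 := by
      have := young_aux c C hc hC (n:ℝ) hx0 (m:ℝ) hm1 (Real.sqrt N) hs
      rw [hs4] at this
      have hsplit : -c * (n:ℝ)^2 / (m:ℝ) = -(c/2)*(n:ℝ)^2/(m:ℝ) - c/2*(n:ℝ)^2/(m:ℝ) := by ring
      linarith
    have e2 : Real.exp (-c * (n:ℝ)^2 / (m:ℝ) + C * (n:ℝ) ^ ((3:ℝ)/2) / Real.sqrt N)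
        ≤ Real.exp (-(c/2) * (n:ℝ)^2/(m:ℝ)) * E := by
      rw [hE, ← Real.exp_add]; exact Real.exp_le_exp.2 e1
    have e5 := per_term c hc (n:ℝ) (m:ℝ) hx0 hm1
    have hrn : Real.exp (-(c/4) * (n:ℝ) / sm) = r^n := by
      rw [hr, ← Real.exp_nat_mul]
      congr 1
      field_simp
    rw [← hsm, hrn] at e5
    calc (n:ℝ) ^ 2 * Real.exp (-c * (n:ℝ)^2 / (m:ℝ) + C * (n:ℝ) ^ ((3:ℝ)/2) / Real.sqrt N)
        ≤ (n:ℝ)^2 * (Real.exp (-(c/2) * (n:ℝ)^2/(m:ℝ)) * E) :=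
          mul_le_mul_of_nonneg_left e2 (by positivity)
      _ = ((n:ℝ)^2 * Real.exp (-(c/2) * (n:ℝ)^2/(m:ℝ))) * E := by ring
      _ ≤ ((4*(m:ℝ)/c) * Real.exp (c/16) * r^n) * E :=
          mul_le_mul_of_nonneg_right e5 hE0.le
      _ = (4*(m:ℝ)/c) * Real.exp (c/16) * E * r^n := by ring
  -- geometric series
  have hr0 : 0 ≤ r := hr ▸ Real.exp_nonneg _
  have hr1 : r < 1 := by
    rw [hr, Real.exp_lt_one_iff, neg_div, neg_lt_zero]
    positivity
  have hgeom : ∑ n ∈ Finset.range (m+1), r^n ≤ (1 + 4/c) * sm := by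
    have h1 : ∑ n ∈ Finset.range (m+1), r^n = (1 - r^(m+1))/(1-r) := by
      rw [geom_sum_eq (ne_of_lt hr1)]
      rw [div_eq_div_iff (by linarith) (by linarith)]
      ring
    have h2 : (1 - r^(m+1))/(1-r) ≤ (1-r)⁻¹ := by
      rw [div_eq_mul_inv]
      have hp : (0:ℝ) ≤ r^(m+1) := pow_nonneg hr0 _
      have hq : (0:ℝ) ≤ (1-r)⁻¹ := inv_nonneg.2 (by linarith)
      nlinarith
    have h3 : (1-r)⁻¹ ≤ 1 + 1/((c/4)/sm) := by
      rw [hr, neg_div]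
      exact one_div_one_sub_exp_neg _ (by positivity)
    have h4 : 1 + 1/((c/4)/sm) = 1 + (4/c) * sm := by
      rw [one_div_div]
      congr 1
      field_simp
    have h5 : 1 + (4/c)*sm ≤ (1 + 4/c) * sm := by nlinarith [div_pos (by norm_num : (0:ℝ) < 4) hc]
    rw [h1]
    calc (1 - r^(m+1))/(1-r) ≤ (1-r)⁻¹ := h2
      _ ≤ 1 + 1/((c/4)/sm) := h3
      _ = 1 + (4/c) * sm := h4
      _ ≤ (1 + 4/c) * sm := h5
  have hm32 : (m:ℝ) * sm = (m:ℝ) ^ ((3:ℝ)/2) := by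
    rw [hsm, Real.sqrt_eq_rpow]
    have h32 : (m:ℝ) ^ ((3:ℝ)/2) = (m:ℝ)^((1:ℝ) + 1/2) := by norm_num
    rw [h32, Real.rpow_add hm0, Real.rpow_one]
  calc ∑ n ∈ Finset.range (m + 1),
        (n : ℝ) ^ 2 * Real.exp (-c * (n : ℝ) ^ 2 / (m : ℝ)
          + C * (n : ℝ) ^ ((3 : ℝ) / 2) / Real.sqrt N)
      ≤ ∑ n ∈ Finset.range (m+1), (4*(m:ℝ)/c) * Real.exp (c/16) * E * r^n :=
        Finset.sum_le_sum key
    _ = (4*(m:ℝ)/c) * Real.exp (c/16) * E * ∑ n ∈ Finset.range (m+1), r^n := by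
        rw [Finset.mul_sum]
    _ ≤ (4*(m:ℝ)/c) * Real.exp (c/16) * E * ((1 + 4/c) * sm) := by
        apply mul_le_mul_of_nonneg_left hgeom (by positivity)
    _ = (4/c) * Real.exp (c/16) * (1 + 4/c) * ((m:ℝ) * sm) * E := by ring
    _ = (4/c) * Real.exp (c/16) * (1 + 4/c) * (m:ℝ)^((3:ℝ)/2) * E := by rw [hm32]
    _ = (4/c) * Real.exp (c/16) * (1 + 4/c) * (m:ℝ)^((3:ℝ)/2)
          * Real.exp ((8*C^4/c^3) * (m:ℝ)^3 / N^2) := by rw [hE]
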